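/- arXiv:2508.19252 — 6 statements merged into one kernel-verified Lean document; each statement's English description precedes it below -/
import Mathlib

section
/- Let y₀ > 0, y ≥ y₀, x₀, x be reals, and let α, n > 0. If (x-1)/y ≥ (x₀-1)/y₀ + nα, then the strip S = {(a,b) ∈ ℝ² : 0 < b x - a y ≤ 1, b > 0} is disjoint from the triangle Ω = {(a,b) : 0 < b ≤ 1, (x₀/y₀) b - 1/y₀ ≤ a < (x₀/y₀ + nα) b - 1/y₀}. -/
/-- If the left edge of the candidacy strip of `(x,y)` meets `b = 1` to the right of the
transversal, then the strip is disjoint from the transversal triangle `Ω`. -/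
theorem strip_disjoint_from_transversal (x₀ y₀ x y α n : ℝ)
    (hy₀ : 0 < y₀) (hy : y₀ ≤ y) (hα : 0 < α) (hn : 0 < n)
    (h : (x - 1) / y ≥ (x₀ - 1) / y₀ + n * α) :
    {p : ℝ × ℝ | 0 < p.2 * x - p.1 * y ∧ p.2 * x - p.1 * y ≤ 1 ∧ 0 < p.2} ∩
      {p : ℝ × ℝ | 0 < p.2 ∧ p.2 ≤ 1 ∧ (x₀ / y₀) * p.2 - 1 / y₀ ≤ p.1 ∧
        p.1 < (x₀ / y₀ + n * α) * p.2 - 1 / y₀} = ∅ := by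
  ext p
  simp only [Set.mem_inter_iff, Set.mem_setOf_eq, Set.mem_empty_iff_false, iff_false]
  rintro ⟨⟨h1, h2, h3⟩, h4, h5, h6, h7⟩
  obtain ⟨a, b⟩ := p
  dsimp only at *
  have hy' : 0 < y := lt_of_lt_of_le hy₀ hy
  -- key: c := x/y - x₀/y₀ - nα ≥ 1/y - 1/y₀
  have hkey : x / y - (x₀ / y₀ + n * α) ≥ 1 / y - 1 / y₀ := by
    have e1 : (x - 1) / y = x / y - 1 / y := by ring
    have e2 : (x₀ - 1) / y₀ = x₀ / y₀ - 1 / y₀ := by ring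
    rw [e1, e2] at h
    linarith
  have ha : (x₀ / y₀ + n * α) * b - 1 / y₀ ≤ a := by
    have hstrip : b * (x / y) - 1 / y ≤ a := by
      have e : b * (x / y) - 1 / y = (b * x - 1) / y := by ring
      rw [e, div_le_iff₀ hy']
      linarith
    have hc : b * (x / y - (x₀ / y₀ + n * α)) ≥ 1 / y - 1 / y₀ := by
      rcases le_or_gt 0 (x / y - (x₀ / y₀ + n * α)) with hcpos | hcneg
      · have : 1 / y - 1 / y₀ ≤ 0 := by
          have : 1 / y ≤ 1 / y₀ := one_div_le_one_div_of_le hy₀ hy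
          linarith
        nlinarith
      · nlinarith
    nlinarith
  exact absurd h7 (not_lt.mpr ha)
end

section
/- Let x, y, u, v, a, b, a' be reals with y > 0, v > 0, 0 < b ≤ 1. Suppose u/v ≥ x/y, 0 < u - a' v ≤ 1, and a' = (x-1)/y. Then for every b ∈ (0,1]: b(x/y) - 1/v ≤ b(u/v) - 1/v ≤ b(x/y) - 1/y. Moreover, if additionally 0 < b x - a y ≤ 1 for some a, then 0 < b u - a v ≤ 1. -/
/-- The key inequality chain: if `(u,v)` is a candidate at `((x-1)/y, 1)` with
`u/v ≥ x/y`, then for all `b ∈ (0,1]` the stated inequalities hold, and any point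
`(a,b)` of the candidacy strip of `(x,y)` lies in the candidacy strip of `(u,v)`. -/
theorem candidacy_strip_inclusion (x y u v a' : ℝ) (hy : 0 < y) (hv : 0 < v)
    (hslope : u / v ≥ x / y) (ha' : a' = (x - 1) / y)
    (hc1 : 0 < u - a' * v) (hc2 : u - a' * v ≤ 1) :
    (∀ b : ℝ, 0 < b → b ≤ 1 →
      b * (x / y) - 1 / v ≤ b * (u / v) - 1 / v ∧
      b * (u / v) - 1 / v ≤ b * (x / y) - 1 / y) ∧
    (∀ a b : ℝ, 0 < b → b ≤ 1 → 0 < b * x - a * y → b * x - a * y ≤ 1 →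
      0 < b * u - a * v ∧ b * u - a * v ≤ 1) := by
  subst ha'
  have hkey : u * y ≤ y + (x - 1) * v := by
    have := hc2
    rw [div_mul_eq_mul_div, sub_div' hy.ne', div_le_one hy] at this
    linarith
  have hslope' : x * v ≤ u * y := by
    rw [ge_iff_le, div_le_div_iff₀ hy hv] at hslope
    linarith
  constructor
  · intro b hb hb1
    constructor
    · have h1 : x / y ≤ u / v := hslope
      nlinarith [mul_le_mul_of_nonneg_left h1 hb.le]
    · have hd : u / v - x / y ≤ 1 / v - 1 / y := by
        rw [div_sub_div _ _ hv.ne' hy.ne', div_sub_div _ _ hv.ne' hy.ne',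
          div_le_div_iff₀ (by positivity) (by positivity)]
        have h3 : u * y - v * x ≤ 1 * y - v * 1 := by linarith
        exact mul_le_mul_of_nonneg_right h3 (by positivity)
      have hd0 : 0 ≤ u / v - x / y := by linarith [hslope]
      nlinarith [mul_le_mul_of_nonneg_right hb1 hd0]
  · intro a b hb hb1 h1 h2
    constructor
    · have : 0 < (b * u - a * v) * y := by nlinarith
      nlinarith [this]
    · nlinarith [mul_nonneg (sub_nonneg.2 hb1) (sub_nonneg.2 hslope')]
end

section
/- Let u, v, a, b be reals with v > 0, b > 0, and 0 < b u - a v ≤ 1 (so (u,v) lies strictly inside the strip S_Λ(a,b)). Then the region R = {(x,y) : 0 < b x - a y ≤ 1, y > 0, v x - u y ≥ 0} is bounded. Conversely, if b u - a v = 0 with v > 0, b > 0, then R is unbounded. -/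
/-- The region of possible winners against a candidate `(u,v)` at `(a,b)` is bounded
iff `b*u - a*v ≠ 0`: bounded when `0 < b*u - a*v ≤ 1`, unbounded when `b*u - a*v = 0`. -/
theorem winner_region_bounded (u v a b : ℝ) (hv : 0 < v) (hb : 0 < b) :
    ((0 < b * u - a * v ∧ b * u - a * v ≤ 1) →
      Bornology.IsBounded {p : ℝ × ℝ | (0 < b * p.1 - a * p.2 ∧ b * p.1 - a * p.2 ≤ 1) ∧
        0 < p.2 ∧ v * p.1 - u * p.2 ≥ 0}) ∧
    (b * u - a * v = 0 →
      ¬ Bornology.IsBounded {p : ℝ × ℝ | (0 < b * p.1 - a * p.2 ∧ b * p.1 - a * p.2 ≤ 1) ∧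
        0 < p.2 ∧ v * p.1 - u * p.2 ≥ 0}) := by
  constructor
  · rintro ⟨hD, _⟩
    set D := b * u - a * v with hDdef
    have hsub : {p : ℝ × ℝ | (0 < b * p.1 - a * p.2 ∧ b * p.1 - a * p.2 ≤ 1) ∧
        0 < p.2 ∧ v * p.1 - u * p.2 ≥ 0} ⊆
        (Set.Icc (-(|a| * (v / D)) / b) ((1 + |a| * (v / D)) / b)) ×ˢ
          (Set.Icc 0 (v / D)) := by
      rintro ⟨x, y⟩ ⟨⟨h1, h2⟩, hy, h3⟩
      have hyD : y ≤ v / D := by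
        rw [le_div_iff₀ hD]
        have : v * (b * x - a * y) ≤ v * 1 := by nlinarith
        nlinarith
      have hay : |a| * y ≤ |a| * (v / D) := by
        apply mul_le_mul_of_nonneg_left hyD (abs_nonneg a)
      have haylb : -(|a| * y) ≤ a * y := by
        have := neg_abs_le (a * y)
        have : |a * y| ≤ |a| * y := by
          rw [abs_mul, abs_of_pos hy]
        nlinarith [neg_abs_le (a * y)]
      constructor
      · constructor
        · rw [div_le_iff₀ hb]
          nlinarith
        · have hayub : a * y ≤ |a| * y := by
            have := le_abs_self (a * y)
            have : |a * y| ≤ |a| * y := by rw [abs_mul, abs_of_pos hy]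
            nlinarith [le_abs_self (a * y)]
          rw [le_div_iff₀ hb]
          nlinarith
      · exact ⟨hy.le, hyD⟩
    exact ((Metric.isBounded_Icc _ _).prod (Metric.isBounded_Icc _ _)).subset hsub
  · intro h0 hbdd
    obtain ⟨C, hC⟩ := hbdd.exists_norm_le
    set t := max (C + 1) 1 with ht
    have ht1 : (1:ℝ) ≤ t := le_max_right _ _
    have htC : C + 1 ≤ t := le_max_left _ _
    have htpos : 0 < t := lt_of_lt_of_le one_pos ht1
    have hmem : ((u * t / v + 1 / (2 * b), t) : ℝ × ℝ) ∈
        {p : ℝ × ℝ | (0 < b * p.1 - a * p.2 ∧ b * p.1 - a * p.2 ≤ 1) ∧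
        0 < p.2 ∧ v * p.1 - u * p.2 ≥ 0} := by
      have hb2 : (0:ℝ) < 2 * b := by linarith
      constructor
      · constructor
        · have : b * (u * t / v + 1 / (2 * b)) - a * t
              = (b * u - a * v) * t / v + 1 / 2 := by
            field_simp
            ring
          rw [this, h0]
          norm_num
        · have : b * (u * t / v + 1 / (2 * b)) - a * t
              = (b * u - a * v) * t / v + 1 / 2 := by
            field_simp
            ring
          rw [this, h0]
          norm_num
      · refine ⟨htpos, ?_⟩
        have : v * (u * t / v + 1 / (2 * b)) - u * t = v / (2 * b) := by
          field_simp
          ring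
        rw [this]
        positivity
    have := hC _ hmem
    have hle : t ≤ ‖((u * t / v + 1 / (2 * b), t) : ℝ × ℝ)‖ := by
      have := norm_snd_le ((u * t / v + 1 / (2 * b), t) : ℝ × ℝ)
      simpa [Real.norm_eq_abs, abs_of_pos htpos] using this
    linarith
end

section
/- The vector w₁ = (2 + 3cos(2π/7), sin(2π/7)) satisfies 0 ≤ (2 + 3cos(2π/7)) - a₁ · sin(2π/7) < 1 with a₁ = (3cos(π/7) - 1)/sin(π/7); that is, w₁ is a candidate left winner at the right endpoint a₁ of the transversal top edge for the double heptagon. -/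
open Real

/-- `w₁ = (2 + 3cos(2π/7), sin(2π/7))` is a candidate left winner at
`a₁ = (3cos(π/7) - 1)/sin(π/7)`. -/
theorem w1_candidate_left_winner :
    0 ≤ (2 + 3 * cos (2 * π / 7)) - ((3 * cos (π / 7) - 1) / sin (π / 7)) * sin (2 * π / 7) ∧
    (2 + 3 * cos (2 * π / 7)) - ((3 * cos (π / 7) - 1) / sin (π / 7)) * sin (2 * π / 7) < 1 := by
  have hs : sin (π / 7) > 0 := by
    apply sin_pos_of_pos_of_lt_pi
    · positivity
    · nlinarith [pi_pos]
  have h2 : (2 : ℝ) * π / 7 = 2 * (π / 7) := by ring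
  have hsin2 : sin (2 * π / 7) = 2 * sin (π / 7) * cos (π / 7) := by
    rw [h2, sin_two_mul]
  have hcos2 : cos (2 * π / 7) = 2 * cos (π / 7) ^ 2 - 1 := by
    rw [h2, cos_two_mul]
  have hE : (2 + 3 * cos (2 * π / 7)) - ((3 * cos (π / 7) - 1) / sin (π / 7)) * sin (2 * π / 7)
      = 2 * cos (π / 7) - 1 := by
    rw [hsin2, hcos2]
    field_simp
    ring
  rw [hE]
  have hlt : cos (π / 7) < 1 := by
    rcases lt_or_eq_of_le (cos_le_one (π/7)) with h1 | h1
    · exact h1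
    · exfalso
      have : π / 7 = 0 := by
        have := cos_eq_one_iff_of_lt_of_lt (x := π / 7) (by nlinarith [pi_pos]) (by nlinarith [pi_pos])
        exact this.mp h1
      nlinarith [pi_pos]
  have hge : cos (π / 3) < cos (π / 7) := by
    apply cos_lt_cos_of_nonneg_of_le_pi
    · positivity
    · nlinarith [pi_pos]
    · nlinarith [pi_pos]
  rw [cos_pi_div_three] at hge
  constructor <;> linarith
end

section
/- For each i ∈ {1,2,3,4}, the point a_{i+1} = (u_i - 1)/v_i lies in the interval [(cos(π/7)-1)/sin(π/7), (3cos(π/7)-1)/sin(π/7)), where (u₁,v₁) = (2+3cos(2π/7), sin(2π/7)), (u₂,v₂) = (4cos(π/7)+3cos(3π/7), sin(3π/7)), (u₃,v₃) = (4cos(π/7)+cos(3π/7), sin(3π/7)), (u₄,v₄) = (2+cos(2π/7), sin(2π/7)). -/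
open Real

/-- The left endpoints `(uᵢ - 1)/vᵢ` of the candidacy intervals of the winning vectors
of the double heptagon all lie in the top edge
`A = [(cos(π/7)-1)/sin(π/7), (3cos(π/7)-1)/sin(π/7))`. -/
theorem left_endpoints_in_A :
    ((2 + 3 * cos (2 * π / 7)) - 1) / sin (2 * π / 7)
      ∈ Set.Ico ((cos (π / 7) - 1) / sin (π / 7)) ((3 * cos (π / 7) - 1) / sin (π / 7)) ∧
    ((4 * cos (π / 7) + 3 * cos (3 * π / 7)) - 1) / sin (3 * π / 7)
      ∈ Set.Ico ((cos (π / 7) - 1) / sin (π / 7)) ((3 * cos (π / 7) - 1) / sin (π / 7)) ∧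
    ((4 * cos (π / 7) + cos (3 * π / 7)) - 1) / sin (3 * π / 7)
      ∈ Set.Ico ((cos (π / 7) - 1) / sin (π / 7)) ((3 * cos (π / 7) - 1) / sin (π / 7)) ∧
    ((2 + cos (2 * π / 7)) - 1) / sin (2 * π / 7)
      ∈ Set.Ico ((cos (π / 7) - 1) / sin (π / 7)) ((3 * cos (π / 7) - 1) / sin (π / 7)) := by
  have hpi := pi_pos
  have h2 : 2 * π / 7 = 2 * (π / 7) := by ring
  have h3 : 3 * π / 7 = 3 * (π / 7) := by ring
  rw [h2, h3, Real.sin_two_mul, Real.cos_two_mul, Real.sin_three_mul, Real.cos_three_mul]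
  set c := cos (π / 7) with hc
  set s := sin (π / 7) with hsdef
  have hs : 0 < s := sin_pos_of_pos_of_lt_pi (by positivity) (by linarith)
  have hpyth : s ^ 2 + c ^ 2 = 1 := sin_sq_add_cos_sq _
  have hc1 : c < 1 := by
    have := Real.cos_lt_cos_of_nonneg_of_le_pi (le_refl (0:ℝ))
      (by linarith : π/7 ≤ π) (by positivity : (0:ℝ) < π/7)
    simpa using this
  have hclb : Real.sqrt 2 / 2 < c := by
    have := Real.cos_lt_cos_of_nonneg_of_le_pi (by positivity : (0:ℝ) ≤ π/7)
      (by linarith : π/4 ≤ π) (by linarith : π/7 < π/4)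
    rw [Real.cos_pi_div_four] at this
    simpa using this
  have hsqrt2 : Real.sqrt 2 ^ 2 = 2 := Real.sq_sqrt (by norm_num)
  have hsqrt2n : 0 ≤ Real.sqrt 2 := Real.sqrt_nonneg 2
  have hcsq : 1 / 2 < c ^ 2 := by nlinarith
  have hchalf : 1 / 2 < c := by nlinarith
  have hd2 : 0 < 2 * s * c := by positivity
  have hd3 : 0 < 3 * s - 4 * s ^ 3 := by nlinarith
  refine ⟨⟨?_, ?_⟩, ⟨?_, ?_⟩, ⟨?_, ?_⟩, ⟨?_, ?_⟩⟩
  · rw [div_le_div_iff₀ hs hd2]; nlinarith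
  · rw [div_lt_div_iff₀ hd2 hs]; nlinarith
  · rw [div_le_div_iff₀ hs hd3]; nlinarith [sq_nonneg s, mul_pos hs hs]
  · rw [div_lt_div_iff₀ hd3 hs]; nlinarith [mul_pos hs hs]
  · rw [div_le_div_iff₀ hs hd3]; nlinarith [mul_pos hs hs]
  · rw [div_lt_div_iff₀ hd3 hs]
    have h4 : 3 * s - 4 * s ^ 3 = s * (4 * c ^ 2 - 1) := by
      rw [show s ^ 3 = s * s ^ 2 by ring, show s ^ 2 = 1 - c ^ 2 by linarith]; ring
    rw [h4]
    nlinarith [mul_pos hs (mul_pos (by linarith : (0:ℝ) < 2*c-1) (by linarith : (0:ℝ) < 2*c^2-1))]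
  · rw [div_le_div_iff₀ hs hd2]; nlinarith
  · rw [div_lt_div_iff₀ hd2 hs]; nlinarith
end

section
/- The five points a₁ > a₂ > a₃ > a₄ > a₅ are strictly decreasing, where a₁ = (3cos(π/7)-1)/sin(π/7), a₂ = (1+3cos(2π/7))/sin(2π/7), a₃ = (4cos(π/7)+3cos(3π/7)-1)/sin(3π/7), a₄ = (4cos(π/7)+cos(3π/7)-1)/sin(3π/7), a₅ = (1+cos(2π/7))/sin(2π/7), and moreover a₅ > (cos(π/7)-1)/sin(π/7). -/
set_option maxHeartbeats 800000

open Real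

/-- The five algorithm points on the top edge of the double heptagon transversal
are strictly decreasing, and the last exceeds the left endpoint of the edge. -/
theorem algorithm_points_decreasing :
    (3 * cos (π / 7) - 1) / sin (π / 7) > (1 + 3 * cos (2 * π / 7)) / sin (2 * π / 7) ∧
    (1 + 3 * cos (2 * π / 7)) / sin (2 * π / 7)
      > (4 * cos (π / 7) + 3 * cos (3 * π / 7) - 1) / sin (3 * π / 7) ∧
    (4 * cos (π / 7) + 3 * cos (3 * π / 7) - 1) / sin (3 * π / 7)
      > (4 * cos (π / 7) + cos (3 * π / 7) - 1) / sin (3 * π / 7) ∧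
    (4 * cos (π / 7) + cos (3 * π / 7) - 1) / sin (3 * π / 7)
      > (1 + cos (2 * π / 7)) / sin (2 * π / 7) ∧
    (1 + cos (2 * π / 7)) / sin (2 * π / 7) > (cos (π / 7) - 1) / sin (π / 7) := by
  have hπ := Real.pi_pos
  have h2 : 2 * π / 7 = 2 * (π / 7) := by ring
  have h3 : 3 * π / 7 = 3 * (π / 7) := by ring
  have hs : 0 < sin (π / 7) := Real.sin_pos_of_pos_of_lt_pi (by linarith) (by linarith)
  have hs2 : 0 < sin (2 * (π / 7)) :=
    Real.sin_pos_of_pos_of_lt_pi (by linarith) (by linarith)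
  have hs3 : 0 < sin (3 * (π / 7)) :=
    Real.sin_pos_of_pos_of_lt_pi (by linarith) (by linarith)
  have hc1 : cos (π / 7) < 1 := by
    have h := Real.cos_lt_cos_of_nonneg_of_le_pi (le_refl (0:ℝ))
      (show π / 7 ≤ π by linarith) (show (0:ℝ) < π / 7 by linarith)
    rwa [Real.cos_zero] at h
  have hc6 : cos (π / 6) < cos (π / 7) :=
    Real.cos_lt_cos_of_nonneg_of_le_pi (by positivity) (by linarith) (by linarith)
  rw [Real.cos_pi_div_six] at hc6
  have hc2 : 3 / 4 < cos (π / 7) ^ 2 := by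
    nlinarith [Real.sq_sqrt (show (0:ℝ) ≤ 3 by norm_num), Real.sqrt_nonneg 3]
  have hchalf : (0.5 : ℝ) < cos (π / 7) := by
    nlinarith [Real.sqrt_nonneg 3, Real.sq_sqrt (show (0:ℝ) ≤ 3 by norm_num)]
  have hc : (0 : ℝ) < cos (π / 7) := by linarith
  have e2s : sin (2 * (π / 7)) = 2 * sin (π / 7) * cos (π / 7) := Real.sin_two_mul _
  have e2c : cos (2 * (π / 7)) = 2 * cos (π / 7) ^ 2 - 1 := Real.cos_two_mul _
  have e3s : sin (3 * (π / 7)) = 3 * sin (π / 7) - 4 * sin (π / 7) ^ 3 :=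
    Real.sin_three_mul _
  have e3c : cos (3 * (π / 7)) = 4 * cos (π / 7) ^ 3 - 3 * cos (π / 7) :=
    Real.cos_three_mul _
  have epyth : sin (π / 7) ^ 2 = 1 - cos (π / 7) ^ 2 := Real.sin_sq _
  set c := cos (π / 7)
  set s := sin (π / 7)
  have e3s' : sin (3 * (π / 7)) = s * (4 * c ^ 2 - 1) := by rw [e3s]; nlinarith [epyth]
  refine ⟨?_, ?_, ?_, ?_, ?_⟩
  · rw [gt_iff_lt, h2, div_lt_div_iff₀ hs2 hs, e2s, e2c]
    nlinarith [mul_pos hs hc]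
  · rw [gt_iff_lt, h2, h3, div_lt_div_iff₀ hs3 hs2, e2s, e2c, e3s', e3c]
    nlinarith [mul_pos hs (mul_pos (show (0:ℝ) < 1 - c by linarith)
      (show (0:ℝ) < 2 * c + 1 by linarith))]
  · rw [gt_iff_lt, h3, div_lt_div_iff₀ hs3 hs3, e3c, e3s']
    nlinarith [mul_pos (mul_pos hs (show (0:ℝ) < 4 * c ^ 2 - 1 by nlinarith))
      (mul_pos hc (show (0:ℝ) < 4 * c ^ 2 - 3 by nlinarith))]
  · rw [gt_iff_lt, h2, h3, div_lt_div_iff₀ hs2 hs3, e2s, e2c, e3s', e3c]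
    nlinarith [mul_pos (mul_pos hs hc) (show (0:ℝ) < 2 * c - 1 by linarith)]
  · rw [gt_iff_lt, h2, div_lt_div_iff₀ hs hs2, e2s, e2c]
    nlinarith [mul_pos hs hc]
end
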